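/- Let x₁,…,x₄, a ∈ ℝ³ and y₁,…,y₄, b ∈ ℝ³ be vectors such that det[xᵢ xⱼ a] ≠ 0 and det[yᵢ yⱼ b] ≠ 0 for all 1 ≤ i < j ≤ 4, where det[u v w] is the determinant of the 3×3 matrix with columns u, v, w. Then there exist flatland cameras A and B (real 2×3 matrices of rank 2) with A·a = 0 and B·b = 0 such that A·xᵢ ∼ B·yᵢ for all i = 1,…,4, if and only if det[x₁x₃a]·det[x₂x₄a]·det[y₁y₄b]·det[y₂y₃b] = det[x₁x₄a]·det[x₂x₃a]·det[y₁y₃b]·det[y₂y₄b]. -/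

import Mathlib

open Matrix

/-- `u ∼ v`: the vectors are equal up to a nonzero real scalar. -/
def Sim {k : ℕ} (u v : Fin k → ℝ) : Prop := ∃ c : ℝ, c ≠ 0 ∧ u = c • v

/-- Determinant of the 3×3 matrix with columns `u`, `v`, `w`. -/
def det3 (u v w : Fin 3 → ℝ) : ℝ := ((Matrix.of ![u, v, w])ᵀ).det

section Aux

/-- Cross product on `Fin 3 → ℝ`. -/
def cross (u v : Fin 3 → ℝ) : Fin 3 → ℝ :=
  ![u 1 * v 2 - u 2 * v 1, u 2 * v 0 - u 0 * v 2, u 0 * v 1 - u 1 * v 0]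

lemma det3_expand (u v w : Fin 3 → ℝ) :
    det3 u v w = u 0 * (v 1 * w 2) + v 0 * (w 1 * u 2) + w 0 * (u 1 * v 2)
      - u 0 * (w 1 * v 2) - v 0 * (u 1 * w 2) - w 0 * (v 1 * u 2) := by
  simp [det3, Matrix.det_fin_three, Matrix.transpose_apply, Matrix.vecHead, Matrix.vecTail]; ring

lemma dot3 (u v : Fin 3 → ℝ) : u ⬝ᵥ v = u 0 * v 0 + u 1 * v 1 + u 2 * v 2 := by
  simp [dotProduct, Fin.sum_univ_three]

lemma det3_eq_dot (u v w : Fin 3 → ℝ) : det3 u v w = cross v w ⬝ᵥ u := by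
  rw [det3_expand, dot3]; simp [cross]; ring

lemma det3_eq_dot' (u v w : Fin 3 → ℝ) : det3 u v w = w ⬝ᵥ cross u v := by
  rw [det3_expand, dot3]; simp [cross]; ring

lemma det3_cyc (u v w : Fin 3 → ℝ) : det3 u v w = det3 w u v := by
  rw [det3_expand, det3_expand]; ring

lemma det3_swap12 (u v w : Fin 3 → ℝ) : det3 u v w = -det3 v u w := by
  rw [det3_expand, det3_expand]; ring

lemma det3_self12 (u w : Fin 3 → ℝ) : det3 u u w = 0 := by
  rw [det3_expand]; ring

lemma det3_self13 (u v : Fin 3 → ℝ) : det3 u v u = 0 := by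
  rw [det3_expand]; ring

lemma det3_self23 (u v : Fin 3 → ℝ) : det3 u v v = 0 := by
  rw [det3_expand]; ring

lemma det3_zero_right (u v : Fin 3 → ℝ) : det3 u v 0 = 0 := by
  rw [det3_expand]; simp

lemma cross_apply0 (u v : Fin 3 → ℝ) : cross u v 0 = u 1 * v 2 - u 2 * v 1 := rfl
lemma cross_apply1 (u v : Fin 3 → ℝ) : cross u v 1 = u 2 * v 0 - u 0 * v 2 := rfl
lemma cross_apply2 (u v : Fin 3 → ℝ) : cross u v 2 = u 0 * v 1 - u 1 * v 0 := rfl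

/-- Lagrange identity. -/
lemma lagrange (r s u v : Fin 3 → ℝ) :
    (r ⬝ᵥ u) * (s ⬝ᵥ v) - (s ⬝ᵥ u) * (r ⬝ᵥ v) = cross r s ⬝ᵥ cross u v := by
  rw [dot3, dot3, dot3, dot3, dot3]
  simp [cross]; ring

/-- Vector triple product vanishing. -/
lemma triple_zero (r s t : Fin 3 → ℝ) (hr : r ⬝ᵥ t = 0) (hs : s ⬝ᵥ t = 0) :
    cross (cross r s) t = 0 := by
  rw [dot3] at hr hs
  have h0 : cross (cross r s) t 0 = 0 := by
    rw [cross_apply0, cross_apply1, cross_apply2]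
    linear_combination (s 0) * hr - (r 0) * hs
  have h1 : cross (cross r s) t 1 = 0 := by
    rw [cross_apply1, cross_apply2, cross_apply0]
    linear_combination (s 1) * hr - (r 1) * hs
  have h2 : cross (cross r s) t 2 = 0 := by
    rw [cross_apply2, cross_apply0, cross_apply1]
    linear_combination (s 2) * hr - (r 2) * hs
  funext i
  fin_cases i
  · exact h0
  · exact h1
  · exact h2

/-- If the cross product with `a ≠ 0` vanishes, the vector is a multiple of `a`. -/
lemma eq_smul_of_cross_eq_zero {c a : Fin 3 → ℝ} (h : cross c a = 0) (ha : a ≠ 0) :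
    ∃ l : ℝ, c = l • a := by
  have h0 := congrFun h 0
  have h1 := congrFun h 1
  have h2 := congrFun h 2
  rw [cross_apply0] at h0; rw [cross_apply1] at h1; rw [cross_apply2] at h2
  simp only [Pi.zero_apply] at h0 h1 h2
  obtain ⟨k, hk⟩ : ∃ k, a k ≠ 0 := Function.ne_iff.mp ha
  fin_cases k
  · replace hk : a 0 ≠ 0 := by simpa using hk
    refine ⟨c 0 / a 0, ?_⟩
    have e0 : c 0 = (c 0 / a 0) * a 0 := by field_simp
    have e1 : c 1 = (c 0 / a 0) * a 1 := by
      rw [div_mul_eq_mul_div, eq_div_iff hk]; linear_combination -h2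
    have e2 : c 2 = (c 0 / a 0) * a 2 := by
      rw [div_mul_eq_mul_div, eq_div_iff hk]; linear_combination h1
    funext i; fin_cases i
    · exact e0
    · exact e1
    · exact e2
  · replace hk : a 1 ≠ 0 := by simpa using hk
    refine ⟨c 1 / a 1, ?_⟩
    have e0 : c 0 = (c 1 / a 1) * a 0 := by
      rw [div_mul_eq_mul_div, eq_div_iff hk]; linear_combination h2
    have e1 : c 1 = (c 1 / a 1) * a 1 := by field_simp
    have e2 : c 2 = (c 1 / a 1) * a 2 := by
      rw [div_mul_eq_mul_div, eq_div_iff hk]; linear_combination -h0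
    funext i; fin_cases i
    · exact e0
    · exact e1
    · exact e2
  · replace hk : a 2 ≠ 0 := by simpa using hk
    refine ⟨c 2 / a 2, ?_⟩
    have e0 : c 0 = (c 2 / a 2) * a 0 := by
      rw [div_mul_eq_mul_div, eq_div_iff hk]; linear_combination -h1
    have e1 : c 1 = (c 2 / a 2) * a 1 := by
      rw [div_mul_eq_mul_div, eq_div_iff hk]; linear_combination h0
    have e2 : c 2 = (c 2 / a 2) * a 2 := by field_simp
    funext i; fin_cases i
    · exact e0
    · exact e1
    · exact e2

/-- For a rank-2 camera with center `a`, the 2×2 determinant of images is a nonzero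
multiple of the bracket with `a`. -/
lemma camera_key (A : Matrix (Fin 2) (Fin 3) ℝ) (a : Fin 3 → ℝ)
    (ha : a ≠ 0) (hAa : A.mulVec a = 0) (hr : A.rank = 2) :
    ∃ l : ℝ, l ≠ 0 ∧ ∀ u v, A.mulVec u 0 * A.mulVec v 1 - A.mulVec u 1 * A.mulVec v 0
      = l * det3 u v a := by
  have hmul0 : ∀ u, A.mulVec u 0 = (fun j => A 0 j) ⬝ᵥ u := fun u => rfl
  have hmul1 : ∀ u, A.mulVec u 1 = (fun j => A 1 j) ⬝ᵥ u := fun u => rfl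
  have hra : (fun j => A 0 j) ⬝ᵥ a = 0 := by rw [← hmul0 a, hAa]; rfl
  have hsa : (fun j => A 1 j) ⬝ᵥ a = 0 := by rw [← hmul1 a, hAa]; rfl
  obtain ⟨l, hl⟩ := eq_smul_of_cross_eq_zero
    (triple_zero (fun j => A 0 j) (fun j => A 1 j) a hra hsa) ha
  have key : ∀ u v, A.mulVec u 0 * A.mulVec v 1 - A.mulVec u 1 * A.mulVec v 0
      = l * det3 u v a := by
    intro u v
    have hL := lagrange (fun j => A 0 j) (fun j => A 1 j) u v
    rw [hl] at hL
    rw [hmul0, hmul1, hmul0, hmul1, hL, smul_dotProduct, smul_eq_mul, det3_eq_dot']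
  refine ⟨l, ?_, key⟩
  have hrange : LinearMap.range A.mulVecLin = ⊤ := by
    apply Submodule.eq_top_of_finrank_eq
    unfold Matrix.rank at hr
    rw [hr, Module.finrank_fin_fun]
  have hu : (![1, 0] : Fin 2 → ℝ) ∈ LinearMap.range A.mulVecLin := by rw [hrange]; trivial
  have hv : (![0, 1] : Fin 2 → ℝ) ∈ LinearMap.range A.mulVecLin := by rw [hrange]; trivial
  obtain ⟨u, hu⟩ := hu
  obtain ⟨v, hv⟩ := hv
  rw [Matrix.mulVecLin_apply] at hu hv
  have h1 := key u v
  rw [hu, hv] at h1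
  simp at h1
  intro hl0
  rw [hl0, zero_mul] at h1
  exact one_ne_zero h1

/-- A 2×3 matrix whose `mulVec` is surjective has rank 2. -/
lemma rank_two_of_surj (A : Matrix (Fin 2) (Fin 3) ℝ)
    (h : Function.Surjective A.mulVec) : A.rank = 2 := by
  unfold Matrix.rank
  have hrange : LinearMap.range A.mulVecLin = ⊤ :=
    LinearMap.range_eq_top.mpr (fun w => by obtain ⟨u, hu⟩ := h w; exact ⟨u, hu⟩)
  rw [hrange, finrank_top, Module.finrank_fin_fun]

lemma mulVec_of_rows (p q u : Fin 3 → ℝ) :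
    (Matrix.of ![p, q]).mulVec u = ![p ⬝ᵥ u, q ⬝ᵥ u] := by
  funext i
  fin_cases i <;> rfl

end Aux

/-- The key equivalence of Theorem 19 (n = 4): four labeled point pairs admit a
common image from centers `a` and `b` exactly when the planar cross-ratios
around `a` and around `b` agree (in cross-multiplied bracket form). -/
theorem four_points_common_image_iff_planar_cross_ratios
    (x y : Fin 4 → Fin 3 → ℝ) (a b : Fin 3 → ℝ)
    (hx : ∀ i j, i < j → det3 (x i) (x j) a ≠ 0)
    (hy : ∀ i j, i < j → det3 (y i) (y j) b ≠ 0) :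
    (∃ A B : Matrix (Fin 2) (Fin 3) ℝ,
        A.rank = 2 ∧ B.rank = 2 ∧ A.mulVec a = 0 ∧ B.mulVec b = 0 ∧
        ∀ i, Sim (A.mulVec (x i)) (B.mulVec (y i)))
    ↔
    det3 (x 0) (x 2) a * det3 (x 1) (x 3) a * det3 (y 0) (y 3) b * det3 (y 1) (y 2) b
      = det3 (x 0) (x 3) a * det3 (x 1) (x 2) a * det3 (y 0) (y 2) b * det3 (y 1) (y 3) b := by
  have hX01 := hx 0 1 (by decide)
  have hX02 := hx 0 2 (by decide)
  have hX03 := hx 0 3 (by decide)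
  have hX12 := hx 1 2 (by decide)
  have hX13 := hx 1 3 (by decide)
  have hY01 := hy 0 1 (by decide)
  have hY02 := hy 0 2 (by decide)
  have hY03 := hy 0 3 (by decide)
  have hY12 := hy 1 2 (by decide)
  have hY13 := hy 1 3 (by decide)
  have ha : a ≠ 0 := fun h => hX01 (by rw [h, det3_zero_right])
  have hb : b ≠ 0 := fun h => hY01 (by rw [h, det3_zero_right])
  constructor
  · rintro ⟨A, B, hrA, hrB, hAa, hBb, hsim⟩
    obtain ⟨lA, hlA, keyA⟩ := camera_key A a ha hAa hrA
    obtain ⟨lB, hlB, keyB⟩ := camera_key B b hb hBb hrB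
    obtain ⟨c0, -, h0⟩ := hsim 0
    obtain ⟨c1, -, h1⟩ := hsim 1
    obtain ⟨c2, -, h2⟩ := hsim 2
    obtain ⟨c3, -, h3⟩ := hsim 3
    have mk : ∀ (i j : Fin 4) (ci cj : ℝ),
        A.mulVec (x i) = ci • B.mulVec (y i) → A.mulVec (x j) = cj • B.mulVec (y j) →
        lA * det3 (x i) (x j) a = ci * cj * (lB * det3 (y i) (y j) b) := by
      intro i j ci cj hi hj
      have dA := keyA (x i) (x j)
      have dB := keyB (y i) (y j)
      rw [hi, hj] at dA
      simp only [Pi.smul_apply, smul_eq_mul] at dA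
      linear_combination -dA + ci * cj * dB
    have e02 := mk 0 2 c0 c2 h0 h2
    have e13 := mk 1 3 c1 c3 h1 h3
    have e03 := mk 0 3 c0 c3 h0 h3
    have e12 := mk 1 2 c1 c2 h1 h2
    have key2 : (lA * lB) ^ 2 *
        (det3 (x 0) (x 2) a * det3 (x 1) (x 3) a * det3 (y 0) (y 3) b * det3 (y 1) (y 2) b)
        = (lA * lB) ^ 2 *
        (det3 (x 0) (x 3) a * det3 (x 1) (x 2) a * det3 (y 0) (y 2) b * det3 (y 1) (y 3) b) := by
      linear_combination
        (lA * det3 (x 1) (x 3) a * lB ^ 2 * det3 (y 0) (y 3) b * det3 (y 1) (y 2) b) * e02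
        + (c0 * c2 * lB * det3 (y 0) (y 2) b * lB ^ 2 * det3 (y 0) (y 3) b * det3 (y 1) (y 2) b) * e13
        - (lA * det3 (x 1) (x 2) a * lB ^ 2 * det3 (y 0) (y 2) b * det3 (y 1) (y 3) b) * e03
        - (c0 * c3 * lB * det3 (y 0) (y 3) b * lB ^ 2 * det3 (y 0) (y 2) b * det3 (y 1) (y 3) b) * e12
    exact mul_left_cancel₀ (pow_ne_zero 2 (mul_ne_zero hlA hlB)) key2
  · intro h
    set s : ℝ := det3 (x 1) (x 2) a / det3 (y 1) (y 2) b with hs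
    set t : ℝ := det3 (x 0) (x 2) a / det3 (y 0) (y 2) b with ht
    have hsne : s ≠ 0 := div_ne_zero hX12 hY12
    have htne : t ≠ 0 := div_ne_zero hX02 hY02
    have mA : ∀ u, (Matrix.of ![cross (x 1) a, cross a (x 0)]).mulVec u
        = ![det3 u (x 1) a, det3 (x 0) u a] := by
      intro u
      rw [mulVec_of_rows, ← det3_eq_dot, ← det3_eq_dot, det3_cyc u a (x 0)]
    have mB : ∀ u, (Matrix.of ![s • cross (y 1) b, t • cross b (y 0)]).mulVec u
        = ![s * det3 u (y 1) b, t * det3 (y 0) u b] := by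
      intro u
      rw [mulVec_of_rows, smul_dotProduct, smul_dotProduct, smul_eq_mul, smul_eq_mul,
        ← det3_eq_dot, ← det3_eq_dot, det3_cyc u b (y 0)]
    refine ⟨Matrix.of ![cross (x 1) a, cross a (x 0)],
      Matrix.of ![s • cross (y 1) b, t • cross b (y 0)], ?_, ?_, ?_, ?_, ?_⟩
    · -- rank A = 2
      apply rank_two_of_surj
      intro w
      refine ⟨(w 0 / det3 (x 0) (x 1) a) • x 0 + (w 1 / det3 (x 0) (x 1) a) • x 1, ?_⟩
      rw [Matrix.mulVec_add, Matrix.mulVec_smul, Matrix.mulVec_smul, mA, mA]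
      have g0 : w 0 / det3 (x 0) (x 1) a * det3 (x 0) (x 1) a
          + w 1 / det3 (x 0) (x 1) a * det3 (x 1) (x 1) a = w 0 := by
        rw [det3_self12]; field_simp; ring
      have g1 : w 0 / det3 (x 0) (x 1) a * det3 (x 0) (x 0) a
          + w 1 / det3 (x 0) (x 1) a * det3 (x 0) (x 1) a = w 1 := by
        rw [det3_self12]; field_simp; ring
      funext j; fin_cases j
      · exact g0
      · exact g1
    · -- rank B = 2
      apply rank_two_of_surj
      intro w
      refine ⟨(w 0 / (s * det3 (y 0) (y 1) b)) • y 0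
        + (w 1 / (t * det3 (y 0) (y 1) b)) • y 1, ?_⟩
      rw [Matrix.mulVec_add, Matrix.mulVec_smul, Matrix.mulVec_smul, mB, mB]
      have g0 : w 0 / (s * det3 (y 0) (y 1) b) * (s * det3 (y 0) (y 1) b)
          + w 1 / (t * det3 (y 0) (y 1) b) * (s * det3 (y 1) (y 1) b) = w 0 := by
        rw [det3_self12, mul_zero, mul_zero, add_zero]
        field_simp
      have g1 : w 0 / (s * det3 (y 0) (y 1) b) * (t * det3 (y 0) (y 0) b)
          + w 1 / (t * det3 (y 0) (y 1) b) * (t * det3 (y 0) (y 1) b) = w 1 := by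
        rw [det3_self12, mul_zero, mul_zero, zero_add]
        field_simp
      funext j; fin_cases j
      · exact g0
      · exact g1
    · -- A a = 0
      rw [mA]
      have g0 : det3 a (x 1) a = 0 := det3_self13 a (x 1)
      have g1 : det3 (x 0) a a = 0 := det3_self23 (x 0) a
      funext j; fin_cases j
      · exact g0
      · exact g1
    · -- B b = 0
      rw [mB]
      have g0 : s * det3 b (y 1) b = 0 := by rw [det3_self13, mul_zero]
      have g1 : t * det3 (y 0) b b = 0 := by rw [det3_self23, mul_zero]
      funext j; fin_cases j
      · exact g0
      · exact g1
    · -- similarity of the four images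
      have key0 : Sim ((Matrix.of ![cross (x 1) a, cross a (x 0)]).mulVec (x 0))
          ((Matrix.of ![s • cross (y 1) b, t • cross b (y 0)]).mulVec (y 0)) := by
        refine ⟨det3 (x 0) (x 1) a / (s * det3 (y 0) (y 1) b),
          div_ne_zero hX01 (mul_ne_zero hsne hY01), ?_⟩
        rw [mA, mB]
        have g0 : det3 (x 0) (x 1) a
            = det3 (x 0) (x 1) a / (s * det3 (y 0) (y 1) b) * (s * det3 (y 0) (y 1) b) := by
          field_simp
        have g1 : det3 (x 0) (x 0) a
            = det3 (x 0) (x 1) a / (s * det3 (y 0) (y 1) b) * (t * det3 (y 0) (y 0) b) := by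
          simp [det3_self12]
        funext j; fin_cases j
        · exact g0
        · exact g1
      have key1 : Sim ((Matrix.of ![cross (x 1) a, cross a (x 0)]).mulVec (x 1))
          ((Matrix.of ![s • cross (y 1) b, t • cross b (y 0)]).mulVec (y 1)) := by
        refine ⟨det3 (x 0) (x 1) a / (t * det3 (y 0) (y 1) b),
          div_ne_zero hX01 (mul_ne_zero htne hY01), ?_⟩
        rw [mA, mB]
        have g0 : det3 (x 1) (x 1) a
            = det3 (x 0) (x 1) a / (t * det3 (y 0) (y 1) b) * (s * det3 (y 1) (y 1) b) := by
          simp [det3_self12]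
        have g1 : det3 (x 0) (x 1) a
            = det3 (x 0) (x 1) a / (t * det3 (y 0) (y 1) b) * (t * det3 (y 0) (y 1) b) := by
          field_simp
        funext j; fin_cases j
        · exact g0
        · exact g1
      have key2 : Sim ((Matrix.of ![cross (x 1) a, cross a (x 0)]).mulVec (x 2))
          ((Matrix.of ![s • cross (y 1) b, t • cross b (y 0)]).mulVec (y 2)) := by
        refine ⟨1, one_ne_zero, ?_⟩
        rw [mA, mB]
        have g0 : det3 (x 2) (x 1) a = 1 * (s * det3 (y 2) (y 1) b) := by
          rw [one_mul, det3_swap12 (x 2) (x 1) a, det3_swap12 (y 2) (y 1) b, hs]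
          field_simp
        have g1 : det3 (x 0) (x 2) a = 1 * (t * det3 (y 0) (y 2) b) := by
          rw [one_mul, ht]
          field_simp
        funext j; fin_cases j
        · exact g0
        · exact g1
      have key3 : Sim ((Matrix.of ![cross (x 1) a, cross a (x 0)]).mulVec (x 3))
          ((Matrix.of ![s • cross (y 1) b, t • cross b (y 0)]).mulVec (y 3)) := by
        refine ⟨det3 (x 1) (x 3) a * det3 (y 1) (y 2) b
            / (det3 (x 1) (x 2) a * det3 (y 1) (y 3) b),
          div_ne_zero (mul_ne_zero hX13 hY12) (mul_ne_zero hX12 hY13), ?_⟩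
        rw [mA, mB]
        have g0 : det3 (x 3) (x 1) a
            = det3 (x 1) (x 3) a * det3 (y 1) (y 2) b
              / (det3 (x 1) (x 2) a * det3 (y 1) (y 3) b)
              * (s * det3 (y 3) (y 1) b) := by
          rw [det3_swap12 (x 3) (x 1) a, det3_swap12 (y 3) (y 1) b, hs]
          field_simp
        have g1 : det3 (x 0) (x 3) a
            = det3 (x 1) (x 3) a * det3 (y 1) (y 2) b
              / (det3 (x 1) (x 2) a * det3 (y 1) (y 3) b)
              * (t * det3 (y 0) (y 3) b) := by
          rw [ht]
          field_simp
          linear_combination -h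
        funext j; fin_cases j
        · exact g0
        · exact g1
      intro i
      fin_cases i
      · exact key0
      · exact key1
      · exact key2
      · exact key3
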